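/- In the reduction from Perfect r-Set Matching, with vectors v_i, f_j ∈ {0,1}^{2rn} defined as follows, one has ‖v_i − f_j‖_0 = 3r − 2 if vertex v_i belongs to hyperedge E_j, and ‖v_i − f_j‖_0 = 3r otherwise. -/

import Mathlib

open Finset

/-- Hamming distance between two integer vectors: the number of differing coordinates. -/
def hdist {D : ℕ} (x y : Fin D → ℤ) : ℕ :=
  (Finset.univ.filter (fun j => x j ≠ y j)).card

/-- Vertex vector `v_i ∈ {0,1}^{2rn}`: ones exactly on the block
`R_i = {2r·i, …, 2r·(i+1)-1}` (0-indexed). -/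
def vvec (r n : ℕ) (i : Fin n) : Fin (2 * r * n) → ℤ :=
  fun j => if 2 * r * i.1 ≤ j.1 ∧ j.1 < 2 * r * (i.1 + 1) then 1 else 0

/-- Hyperedge vector `f_E ∈ {0,1}^{2rn}`: ones exactly at the distinguished positions
`p_s = 2r·s` for the vertices `s ∈ E`. -/
def fvec (r n : ℕ) (E : Finset (Fin n)) : Fin (2 * r * n) → ℤ :=
  fun h => if ∃ s ∈ E, h.1 = 2 * r * s.1 then 1 else 0

/-- `‖v_i - f_E‖₀ = 3r - 2` if `v_i ∈ E`, and `3r` otherwise. -/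
theorem hamming_vertex_edge_vector
    {r n : ℕ} (hr : 1 ≤ r) (i : Fin n) (E : Finset (Fin n)) (hE : E.card = r) :
    hdist (vvec r n i) (fvec r n E) = if i ∈ E then 3 * r - 2 else 3 * r := by
  classical
  set A : Finset (Fin (2*r*n)) :=
    univ.filter (fun j => 2*r*i.1 ≤ j.1 ∧ j.1 < 2*r*(i.1+1)) with hA
  set B : Finset (Fin (2*r*n)) :=
    univ.filter (fun j => ∃ s ∈ E, j.1 = 2*r*s.1) with hB
  have hset : univ.filter (fun j => vvec r n i j ≠ fvec r n E j)
      = (A \ B) ∪ (B \ A) := by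
    ext j
    rw [Finset.mem_filter]
    by_cases hP : 2*r*i.1 ≤ j.1 ∧ j.1 < 2*r*(i.1+1) <;>
      by_cases hQ : ∃ s ∈ E, j.1 = 2*r*s.1 <;>
      simp [hA, hB, vvec, fvec, hP, hQ]
  -- card A = 2r
  have hcardA : A.card = 2*r := by
    have himg : A.image Fin.val = Finset.Ico (2*r*i.1) (2*r*(i.1+1)) := by
      ext x
      simp only [mem_image, hA, mem_filter, mem_univ, true_and, Finset.mem_Ico]
      constructor
      · rintro ⟨j, hj, rfl⟩; exact hj
      · intro hx
        have hlt : x < 2*r*n := lt_of_lt_of_le hx.2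
          (Nat.mul_le_mul_left _ (Nat.succ_le_of_lt i.2))
        exact ⟨⟨x, hlt⟩, hx, rfl⟩
    have hthis := Finset.card_image_of_injective A (Fin.val_injective)
    rw [himg, Nat.card_Ico] at hthis
    have key : 2*r*(i.1+1) - 2*r*i.1 = 2*r := by rw [Nat.mul_succ]; omega
    omega
  -- card B = r
  have hcardB : B.card = r := by
    have himg : B = E.image (fun s : Fin n =>
        (⟨2*r*s.1, by
          have : s.1 + 1 ≤ n := s.2
          calc 2*r*s.1 < 2*r*(s.1+1) := by nlinarith
            _ ≤ 2*r*n := Nat.mul_le_mul_left _ this⟩ : Fin (2*r*n))) := by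
      ext j
      simp only [hB, mem_filter, mem_univ, true_and, mem_image]
      constructor
      · rintro ⟨s, hs, hj⟩; exact ⟨s, hs, by ext; simp [hj]⟩
      · rintro ⟨s, hs, rfl⟩; exact ⟨s, hs, rfl⟩
    rw [himg, Finset.card_image_of_injective _ ?_, hE]
    intro a b hab
    have : 2*r*a.1 = 2*r*b.1 := congrArg Fin.val hab
    have : a.1 = b.1 := by
      have h2r : 0 < 2*r := by omega
      exact Nat.eq_of_mul_eq_mul_left h2r this
    exact Fin.ext this
  -- intersection
  have hinter : (A ∩ B).card = if i ∈ E then 1 else 0 := by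
    by_cases hi : i ∈ E
    · have : A ∩ B = {⟨2*r*i.1, by
        have : i.1 + 1 ≤ n := i.2
        calc 2*r*i.1 < 2*r*(i.1+1) := by nlinarith
          _ ≤ 2*r*n := Nat.mul_le_mul_left _ this⟩} := by
        ext j
        simp only [Finset.mem_inter, hA, hB, mem_filter, mem_univ, true_and,
          Finset.mem_singleton]
        constructor
        · rintro ⟨⟨h1, h2⟩, s, hs, hj⟩
          have hsi : s.1 = i.1 := by
            rw [hj] at h1 h2; nlinarith [s.1, i.1]
          ext; simp [hj, hsi]
        · rintro rfl
          refine ⟨⟨le_refl _, by nlinarith⟩, i, hi, rfl⟩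
      rw [this]; simp [hi]
    · have : A ∩ B = ∅ := by
        ext j
        simp only [Finset.mem_inter, hA, hB, mem_filter, mem_univ, true_and,
          Finset.notMem_empty, iff_false, not_and]
        rintro ⟨h1, h2⟩ ⟨s, hs, hj⟩
        have : s.1 = i.1 := by rw [hj] at h1 h2; nlinarith
        exact hi (Fin.ext this ▸ hs)
      rw [this]; simp [hi]
  have hdisj : Disjoint (A \ B) (B \ A) :=
    disjoint_sdiff_sdiff
  unfold hdist
  rw [hset, Finset.card_union_of_disjoint hdisj]
  have e1 : (A ∩ B).card + (A \ B).card = A.card := Finset.card_inter_add_card_sdiff A B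
  have e2 : (B ∩ A).card + (B \ A).card = B.card := Finset.card_inter_add_card_sdiff B A
  rw [Finset.inter_comm] at e2
  by_cases hi : i ∈ E
  · rw [if_pos hi] at hinter ⊢
    omega
  · rw [if_neg hi] at hinter ⊢
    omega
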